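/- Let O be a Hermitian d×d complex matrix with distinct eigenvalues λ₀ < ... < λ_{J−1}, spectral projectors Π_j, and Ξ-decomposition with reflections Ξ_x = I − 2∑_{j<x} Π_j and coefficients c_x = (λ_x − λ_{x−1})/2. Let ψ be a unit vector supported on at most two eigenspaces of O, i.e. ψ = α·φ_m + β·φ_n where φ_m, φ_n are unit eigenvectors with eigenvalues λ_m, λ_n (m ≤ n) and |α|² + |β|² = 1. Then (∑_{x=1}^{J−1} c_x·√(1 − ⟨ψ, Ξ_x ψ⟩²))² = ⟨ψ, O² ψ⟩ − ⟨ψ, O ψ⟩² = |α|²·|β|²·(λ_n − λ_m)². -/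

import Mathlib

open scoped Matrix

/-- The expectation value `⟨ψ, A ψ⟩` (real part) of a matrix `A` on a vector `ψ`. -/
noncomputable def expval {d : ℕ} (A : Matrix (Fin d) (Fin d) ℂ) (ψ : Fin d → ℂ) : ℝ :=
  (star ψ ⬝ᵥ A.mulVec ψ).re

open Matrix Finset

private theorem sum_mulVec' {d : ℕ} (s : Finset ℕ) (A : ℕ → Matrix (Fin d) (Fin d) ℂ)
    (v : Fin d → ℂ) : (∑ j ∈ s, A j) *ᵥ v = ∑ j ∈ s, A j *ᵥ v := by
  induction s using Finset.cons_induction with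
  | empty => simp [Matrix.zero_mulVec]
  | cons a s ha ih => rw [Finset.sum_cons, Finset.sum_cons, Matrix.add_mulVec, ih]

set_option maxHeartbeats 1600000 in
/-- Saturation part of **Lemma 4**: for a Hermitian `O` with distinct eigenvalues
`λ₀ < ... < λ_{J−1}`, spectral projectors `Π_j`, reflections `Ξ_x = I − 2∑_{j<x} Π_j`
and coefficients `c_x = (λ_x − λ_{x−1})/2`, and a unit state `ψ = α·φ_m + β·φ_n`
supported on at most two eigenspaces (`|α|² + |β|² = 1`, `m ≤ n`), the
optimal-allocation cost of the Ξ-decomposition equals the von Neumann variance: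
`(∑_{x=1}^{J−1} c_x √(1 − ⟨ψ, Ξ_x ψ⟩²))² = ⟨ψ, O² ψ⟩ − ⟨ψ, O ψ⟩²
  = |α|²·|β|²·(λ_n − λ_m)²`. -/
theorem stmt_15 {d : ℕ} (J : ℕ) (hJ : 0 < J)
    (O : Matrix (Fin d) (Fin d) ℂ) (hO : O.IsHermitian)
    (lam : ℕ → ℝ) (P : ℕ → Matrix (Fin d) (Fin d) ℂ)
    (hlam : ∀ j, j + 1 < J → lam j < lam (j + 1))
    (hPh : ∀ j < J, (P j).IsHermitian)
    (hPo : ∀ j < J, ∀ k < J, P j * P k = if j = k then P j else 0)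
    (hPsum : ∑ j ∈ Finset.range J, P j = 1)
    (hOspec : O = ∑ j ∈ Finset.range J, lam j • P j)
    (Xi : ℕ → Matrix (Fin d) (Fin d) ℂ)
    (hXi : ∀ x, Xi x = 1 - 2 • ∑ j ∈ Finset.range x, P j)
    (m n : ℕ) (hmn : m ≤ n) (hn : n < J)
    (φm φn : Fin d → ℂ)
    (hφm : star φm ⬝ᵥ φm = 1) (hφn : star φn ⬝ᵥ φn = 1)
    (hφmEig : O.mulVec φm = lam m • φm) (hφnEig : O.mulVec φn = lam n • φn)
    (α β : ℂ) (hαβ : ‖α‖ ^ 2 + ‖β‖ ^ 2 = 1)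
    (ψ : Fin d → ℂ) (hψdef : ψ = α • φm + β • φn) (hψ : star ψ ⬝ᵥ ψ = 1) :
    (∑ x ∈ Finset.Ico 1 J,
        ((lam x - lam (x - 1)) / 2) * Real.sqrt (1 - expval (Xi x) ψ ^ 2)) ^ 2
      = (star ψ ⬝ᵥ (O * O).mulVec ψ).re - (star ψ ⬝ᵥ O.mulVec ψ).re ^ 2 ∧
    (star ψ ⬝ᵥ (O * O).mulVec ψ).re - (star ψ ⬝ᵥ O.mulVec ψ).re ^ 2
      = ‖α‖ ^ 2 * ‖β‖ ^ 2 * (lam n - lam m) ^ 2 := by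
  have hmJ : m < J := lt_of_le_of_lt hmn hn
  -- real smul = complex smul coercion
  have hcoe : ∀ (r : ℝ) (v : Fin d → ℂ), r • v = (r : ℂ) • v := by
    intro r v; ext i; simp [Complex.real_smul]
  -- strict monotonicity below J
  have hlam' : ∀ i j : ℕ, i < j → j < J → lam i < lam j := by
    intro i j hij hjJ
    induction j with
    | zero => omega
    | succ k ih =>
      rcases Nat.lt_succ_iff_lt_or_eq.mp hij with h | h
      · exact (ih h (by omega)).trans (hlam k hjJ)
      · subst h; exact hlam i hjJ
  -- eigenvector projection lemma
  have key : ∀ (φ : Fin d → ℂ) (t : ℕ), t < J → O.mulVec φ = lam t • φ →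
      ∀ j < J, P j *ᵥ φ = if j = t then φ else 0 := by
    intro φ t htJ hφ j hjJ
    have hne : ∀ k, k < J → k ≠ t → P k *ᵥ φ = 0 := by
      intro k hkJ hkt
      have hPO : P k * O = (lam k : ℝ) • P k := by
        rw [hOspec, Finset.mul_sum]
        rw [Finset.sum_eq_single_of_mem k (Finset.mem_range.mpr hkJ)]
        · rw [mul_smul_comm, hPo k hkJ k hkJ, if_pos rfl]
        · intro b hb hbk
          rw [mul_smul_comm, hPo k hkJ b (Finset.mem_range.mp hb),
            if_neg (fun h => hbk h.symm), smul_zero]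
      have h1 : P k *ᵥ (O *ᵥ φ) = (lam k : ℝ) • (P k *ᵥ φ) := by
        rw [mulVec_mulVec, hPO, smul_mulVec]
      have h2 : P k *ᵥ (O *ᵥ φ) = (lam t : ℝ) • (P k *ᵥ φ) := by
        rw [hφ, mulVec_smul]
      have h3 : ((lam k - lam t : ℝ)) • (P k *ᵥ φ) = 0 := by
        rw [sub_smul, h1.symm.trans h2, sub_self]
      have hne' : (lam k - lam t : ℝ) ≠ 0 := by
        rcases Nat.lt_or_ge k t with h | h
        · exact sub_ne_zero.mpr (ne_of_lt (hlam' k t h htJ))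
        · have : t < k := lt_of_le_of_ne h (fun e => hkt e.symm)
          exact sub_ne_zero.mpr (ne_of_gt (hlam' t k this hkJ))
      exact (smul_eq_zero.mp h3).resolve_left hne'
    by_cases hjt : j = t
    · subst hjt
      have hsum : ∑ k ∈ Finset.range J, (P k *ᵥ φ) = φ := by
        rw [← sum_mulVec', hPsum, Matrix.one_mulVec]
      rw [if_pos rfl]
      rw [Finset.sum_eq_single_of_mem j (Finset.mem_range.mpr hjJ)] at hsum
      · exact hsum
      · intro b hb hbj
        by_cases hbt : b = j
        · exact absurd hbt hbj
        · exact hne b (Finset.mem_range.mp hb) hbt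
    · rw [if_neg hjt]; exact hne j hjJ hjt
  have hPm : ∀ j < J, P j *ᵥ φm = if j = m then φm else 0 := key φm m hmJ hφmEig
  have hPn : ∀ j < J, P j *ᵥ φn = if j = n then φn else 0 := key φn n hn hφnEig
  -- partial sums
  have hSm : ∀ x ≤ J, (∑ j ∈ Finset.range x, P j) *ᵥ φm = if m < x then φm else 0 := by
    intro x hx
    rw [sum_mulVec']
    rw [Finset.sum_congr rfl (fun j hj => hPm j (lt_of_lt_of_le (Finset.mem_range.mp hj) hx))]
    simp [Finset.sum_ite_eq', Finset.mem_range]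
  have hSn : ∀ x ≤ J, (∑ j ∈ Finset.range x, P j) *ᵥ φn = if n < x then φn else 0 := by
    intro x hx
    rw [sum_mulVec']
    rw [Finset.sum_congr rfl (fun j hj => hPn j (lt_of_lt_of_le (Finset.mem_range.mp hj) hx))]
    simp [Finset.sum_ite_eq', Finset.mem_range]
  -- action of partial sums on ψ
  have hSψ : ∀ x ≤ J, (∑ j ∈ Finset.range x, P j) *ᵥ ψ
      = α • (if m < x then φm else 0) + β • (if n < x then φn else 0) := by
    intro x hx
    rw [hψdef, Matrix.mulVec_add, Matrix.mulVec_smul, Matrix.mulVec_smul, hSm x hx, hSn x hx]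
  -- the Xi expectation as a dot product
  have hXidot : ∀ x ≤ J, star ψ ⬝ᵥ (Xi x *ᵥ ψ)
      = 1 - 2 * (star ψ ⬝ᵥ ((∑ j ∈ Finset.range x, P j) *ᵥ ψ)) := by
    intro x hx
    rw [hXi x, Matrix.sub_mulVec, Matrix.one_mulVec, dotProduct_sub, hψ, two_smul,
      Matrix.add_mulVec, dotProduct_add]
    ring
  rcases eq_or_lt_of_le hmn with rfl | hmn'
  · -- degenerate case m = n
    have hOψ : O *ᵥ ψ = ((lam m : ℝ) : ℂ) • ψ := by
      rw [hψdef, Matrix.mulVec_add, Matrix.mulVec_smul, Matrix.mulVec_smul, hφmEig, hφnEig,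
        hcoe, smul_comm α, smul_comm β, smul_add]
      rw [hcoe]
    have hO2ψ : (O * O) *ᵥ ψ = (((lam m : ℝ) : ℂ) * ((lam m : ℝ) : ℂ)) • ψ := by
      rw [← Matrix.mulVec_mulVec, hOψ, Matrix.mulVec_smul, hOψ, smul_smul]
    have hE1 : (star ψ ⬝ᵥ O *ᵥ ψ).re = lam m := by
      rw [hOψ, dotProduct_smul, hψ]; simp
    have hE2 : (star ψ ⬝ᵥ (O * O) *ᵥ ψ).re = lam m * lam m := by
      rw [hO2ψ, dotProduct_smul, hψ]; simp
    have hvar : (star ψ ⬝ᵥ (O * O) *ᵥ ψ).re - (star ψ ⬝ᵥ O *ᵥ ψ).re ^ 2 = 0 := by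
      rw [hE1, hE2]; ring
    constructor
    · rw [hvar]
      have hzero : ∀ x ∈ Finset.Ico 1 J,
          ((lam x - lam (x - 1)) / 2) * Real.sqrt (1 - expval (Xi x) ψ ^ 2) = 0 := by
        intro x hx
        obtain ⟨hx1, hx2⟩ := Finset.mem_Ico.mp hx
        have hv : (∑ j ∈ Finset.range x, P j) *ᵥ ψ = if m < x then ψ else 0 := by
          rw [hSψ x (le_of_lt hx2)]
          by_cases h : m < x
          · rw [if_pos h, if_pos h, if_pos h, hψdef]
          · rw [if_neg h, if_neg h, if_neg h, smul_zero, smul_zero, add_zero]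
        have he : expval (Xi x) ψ = 1 - 2 * (if m < x then 1 else 0) := by
          unfold expval
          rw [hXidot x (le_of_lt hx2), hv]
          by_cases h : m < x
          · rw [if_pos h, if_pos h, hψ]; simp
          · rw [if_neg h, if_neg h, dotProduct_zero]; simp
        have : 1 - expval (Xi x) ψ ^ 2 = 0 := by
          rw [he]; by_cases h : m < x
          · rw [if_pos h]; ring
          · rw [if_neg h]; ring
        rw [this, Real.sqrt_zero, mul_zero]
      rw [Finset.sum_congr rfl hzero, Finset.sum_const, smul_zero]
      ring
    · rw [hvar]; ring
  · -- main case m < n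
    have hnm : n ≠ m := Nat.ne_of_gt hmn'
    have hmn'' : m ≠ n := Nat.ne_of_lt hmn'
    -- orthogonality
    have hPnm : P n *ᵥ φm = 0 := by rw [hPm n hn, if_neg hnm]
    have hPmn : P m *ᵥ φn = 0 := by rw [hPn m hmJ, if_neg hmn'']
    have hstarPn : star φm ᵥ* P n = 0 := by
      have h := star_mulVec (P n) φm
      rw [hPnm, (hPh n hn)] at h
      simpa using h.symm
    have hstarPm : star φn ᵥ* P m = 0 := by
      have h := star_mulVec (P m) φn
      rw [hPmn, (hPh m hmJ)] at h
      simpa using h.symm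
    have hon : star φm ⬝ᵥ φn = 0 := by
      have h1 : P n *ᵥ φn = φn := by rw [hPn n hn, if_pos rfl]
      calc star φm ⬝ᵥ φn = star φm ⬝ᵥ (P n *ᵥ φn) := by rw [h1]
        _ = (star φm ᵥ* P n) ⬝ᵥ φn := dotProduct_mulVec _ _ _
        _ = 0 := by rw [hstarPn, zero_dotProduct]
    have hno : star φn ⬝ᵥ φm = 0 := by
      have h1 : P m *ᵥ φm = φm := by rw [hPm m hmJ, if_pos rfl]
      calc star φn ⬝ᵥ φm = star φn ⬝ᵥ (P m *ᵥ φm) := by rw [h1]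
        _ = (star φn ᵥ* P m) ⬝ᵥ φm := dotProduct_mulVec _ _ _
        _ = 0 := by rw [hstarPm, zero_dotProduct]
    -- the basic dot product expansion
    have hdot : ∀ u v : ℂ, star ψ ⬝ᵥ (u • φm + v • φn)
        = (starRingEnd ℂ) α * u + (starRingEnd ℂ) β * v := by
      intro u v
      rw [hψdef]
      simp only [star_add, star_smul, add_dotProduct, dotProduct_add, smul_dotProduct,
        dotProduct_smul, hφm, hφn, hon, hno, smul_eq_mul, mul_one, mul_zero, add_zero, zero_add,
        RCLike.star_def]
      ring
    have habs : (starRingEnd ℂ) α * α = ((‖α‖ ^ 2 : ℝ) : ℂ) := by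
      rw [mul_comm, Complex.mul_conj, Complex.normSq_eq_norm_sq]
    have habsb : (starRingEnd ℂ) β * β = ((‖β‖ ^ 2 : ℝ) : ℂ) := by
      rw [mul_comm, Complex.mul_conj, Complex.normSq_eq_norm_sq]
    -- expectations of O and O²
    have hOψ : O *ᵥ ψ = (α * lam m) • φm + (β * lam n) • φn := by
      rw [hψdef, Matrix.mulVec_add, Matrix.mulVec_smul, Matrix.mulVec_smul, hφmEig, hφnEig,
        hcoe, hcoe, smul_smul, smul_smul]
    have hO2ψ : (O * O) *ᵥ ψ = (α * lam m * lam m) • φm + (β * lam n * lam n) • φn := by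
      rw [← Matrix.mulVec_mulVec, hOψ, Matrix.mulVec_add, Matrix.mulVec_smul, Matrix.mulVec_smul,
        hφmEig, hφnEig, hcoe, hcoe, smul_smul, smul_smul]
    have hE1 : (star ψ ⬝ᵥ O *ᵥ ψ).re
        = ‖α‖ ^ 2 * lam m + ‖β‖ ^ 2 * lam n := by
      rw [hOψ, hdot]
      have : (starRingEnd ℂ) α * (α * lam m) + (starRingEnd ℂ) β * (β * lam n)
          = ((‖α‖ ^ 2 * lam m + ‖β‖ ^ 2 * lam n : ℝ) : ℂ) := by
        push_cast
        rw [show (starRingEnd ℂ) α * (α * (lam m : ℂ)) = ((starRingEnd ℂ) α * α) * lam m by ring,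
          show (starRingEnd ℂ) β * (β * (lam n : ℂ)) = ((starRingEnd ℂ) β * β) * lam n by ring,
          habs, habsb]
        push_cast; ring
      rw [this, Complex.ofReal_re]
    have hE2 : (star ψ ⬝ᵥ (O * O) *ᵥ ψ).re
        = ‖α‖ ^ 2 * (lam m * lam m) + ‖β‖ ^ 2 * (lam n * lam n) := by
      rw [hO2ψ, hdot]
      have : (starRingEnd ℂ) α * (α * lam m * lam m) + (starRingEnd ℂ) β * (β * lam n * lam n)
          = ((‖α‖ ^ 2 * (lam m * lam m)
              + ‖β‖ ^ 2 * (lam n * lam n) : ℝ) : ℂ) := by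
        push_cast
        rw [show (starRingEnd ℂ) α * (α * (lam m : ℂ) * (lam m : ℂ))
              = ((starRingEnd ℂ) α * α) * ((lam m : ℂ) * lam m) by ring,
          show (starRingEnd ℂ) β * (β * (lam n : ℂ) * (lam n : ℂ))
              = ((starRingEnd ℂ) β * β) * ((lam n : ℂ) * lam n) by ring,
          habs, habsb]
        push_cast; ring
      rw [this, Complex.ofReal_re]
    have part2 : (star ψ ⬝ᵥ (O * O) *ᵥ ψ).re - (star ψ ⬝ᵥ O *ᵥ ψ).re ^ 2
        = ‖α‖ ^ 2 * ‖β‖ ^ 2 * (lam n - lam m) ^ 2 := by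
      rw [hE1, hE2]
      linear_combination (-(‖α‖ ^ 2 * (lam m * lam m)
        + ‖β‖ ^ 2 * (lam n * lam n))) * hαβ
    -- the Xi expectations
    have hex : ∀ x ∈ Finset.Ico 1 J, expval (Xi x) ψ
        = 1 - 2 * ((if m < x then ‖α‖ ^ 2 else 0)
            + (if n < x then ‖β‖ ^ 2 else 0)) := by
      intro x hx
      obtain ⟨hx1, hx2⟩ := Finset.mem_Ico.mp hx
      unfold expval
      rw [hXidot x (le_of_lt hx2), hSψ x (le_of_lt hx2)]
      have hv : α • (if m < x then φm else 0) + β • (if n < x then φn else 0)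
          = ((if m < x then α else 0)) • φm + ((if n < x then β else 0)) • φn := by
        split_ifs <;> simp
      rw [hv, hdot]
      have : (starRingEnd ℂ) α * (if m < x then α else 0)
          + (starRingEnd ℂ) β * (if n < x then β else 0)
          = (((if m < x then ‖α‖ ^ 2 else 0)
              + (if n < x then ‖β‖ ^ 2 else 0) : ℝ) : ℂ) := by
        split_ifs <;> simp [habs, habsb]
      rw [this]
      rw [show (1 : ℂ) - 2 * (((if m < x then ‖α‖ ^ 2 else 0)
          + (if n < x then ‖β‖ ^ 2 else 0) : ℝ) : ℂ)
          = ((1 - 2 * ((if m < x then ‖α‖ ^ 2 else 0)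
              + (if n < x then ‖β‖ ^ 2 else 0)) : ℝ) : ℂ) by push_cast; ring,
        Complex.ofReal_re]
    -- abbreviations
    have ha0 : (0:ℝ) ≤ ‖α‖ ^ 2 := sq_nonneg _
    have hb0 : (0:ℝ) ≤ ‖β‖ ^ 2 := sq_nonneg _
    -- sum over the middle window only
    have hsub : Finset.Ico (m+1) (n+1) ⊆ Finset.Ico 1 J := by
      intro x hx
      rw [Finset.mem_Ico] at hx ⊢
      omega
    have hsumeq : ∑ x ∈ Finset.Ico 1 J,
        ((lam x - lam (x - 1)) / 2) * Real.sqrt (1 - expval (Xi x) ψ ^ 2)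
        = ∑ x ∈ Finset.Ico (m+1) (n+1),
            ((lam x - lam (x - 1)) / 2) * Real.sqrt (1 - expval (Xi x) ψ ^ 2) := by
      refine (Finset.sum_subset hsub ?_).symm
      intro x hx hx'
      rw [Finset.mem_Ico] at hx hx'
      have he := hex x (Finset.mem_Ico.mpr hx)
      have h10 : 1 - expval (Xi x) ψ ^ 2 = 0 := by
        rcases Nat.lt_or_ge x (m+1) with h | h
        · have h1 : ¬ m < x := by omega
          have h2 : ¬ n < x := by omega
          rw [he, if_neg h1, if_neg h2]; ring
        · have h1 : m < x := by omega
          have h2 : n < x := by omega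
          rw [he, if_pos h1, if_pos h2]
          nlinarith [hαβ]
      rw [h10, Real.sqrt_zero, mul_zero]
    have hmid : ∀ x ∈ Finset.Ico (m+1) (n+1),
        ((lam x - lam (x - 1)) / 2) * Real.sqrt (1 - expval (Xi x) ψ ^ 2)
        = ((lam x - lam (x - 1))) * (Real.sqrt (‖α‖ ^ 2) * Real.sqrt (‖β‖ ^ 2)) := by
      intro x hx
      have hx' := Finset.mem_Ico.mp hx
      have he := hex x (hsub hx)
      have h1 : m < x := by omega
      have h2 : ¬ n < x := by omega
      rw [he, if_pos h1, if_neg h2, add_zero]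
      have h4 : 1 - (1 - 2 * ‖α‖ ^ 2) ^ 2
          = (2 * Real.sqrt (‖α‖ ^ 2) * Real.sqrt (‖β‖ ^ 2)) ^ 2 := by
        rw [mul_pow, mul_pow, Real.sq_sqrt ha0, Real.sq_sqrt hb0]
        nlinarith [hαβ]
      rw [h4, Real.sqrt_sq (by positivity)]
      ring
    have htel : ∑ x ∈ Finset.Ico (m+1) (n+1), (lam x - lam (x - 1)) = lam n - lam m := by
      rw [Finset.sum_Ico_eq_sum_range]
      have h1 : n + 1 - (m + 1) = n - m := by omega
      rw [h1]
      have h2 : ∀ i ∈ Finset.range (n - m),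
          lam (m + 1 + i) - lam (m + 1 + i - 1)
          = lam (m + (i + 1)) - lam (m + i) := by
        intro i _
        congr 2 <;> omega
      rw [Finset.sum_congr rfl h2, Finset.sum_range_sub (fun i => lam (m + i)) (n - m)]
      congr 2
      omega
    have hsum : ∑ x ∈ Finset.Ico 1 J,
        ((lam x - lam (x - 1)) / 2) * Real.sqrt (1 - expval (Xi x) ψ ^ 2)
        = (lam n - lam m) * (Real.sqrt (‖α‖ ^ 2) * Real.sqrt (‖β‖ ^ 2)) := by
      rw [hsumeq, Finset.sum_congr rfl hmid, ← Finset.sum_mul, htel]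
    constructor
    · rw [hsum, part2, mul_pow, mul_pow, Real.sq_sqrt ha0, Real.sq_sqrt hb0]
      ring
    · exact part2
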